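/- For the SAHARA utility U with parameters a > 0, a ≠ 1, b > 0, δ ∈ ℝ: lim_{w→+∞} U(w) = 0 if a > 1 and lim_{w→+∞} U(w) = +∞ if a ∈ (0,1); and lim_{w→−∞} U(w) = −∞ for every a > 0 with a ≠ 1. -/

import Mathlib

open Filter
open scoped Topology

noncomputable section

/-- The SAHARA utility function with risk-aversion `a ≠ 1`, scale `b > 0`, threshold `δ`:
`U(w) = −(1/(a²−1)) ((w−δ) + a√(b²+(w−δ)²)) / ((w−δ) + √(b²+(w−δ)²))^a`. -/
def sahara (a b δ : ℝ) (w : ℝ) : ℝ :=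
  -(1 / (a ^ 2 - 1)) *
    (((w - δ) + a * Real.sqrt (b ^ 2 + (w - δ) ^ 2)) /
      ((w - δ) + Real.sqrt (b ^ 2 + (w - δ) ^ 2)) ^ a)

/-- The substitution `s(w) = (w-δ) + √(b²+(w-δ)²)`. -/
def saharaS (b δ : ℝ) (w : ℝ) : ℝ := (w - δ) + Real.sqrt (b ^ 2 + (w - δ) ^ 2)

lemma saharaS_pos (b δ : ℝ) (hb : 0 < b) (w : ℝ) : 0 < saharaS b δ w := by
  unfold saharaS
  set x := w - δ
  have hx : |x| < Real.sqrt (b ^ 2 + x ^ 2) := by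
    rw [← Real.sqrt_sq_eq_abs]
    exact Real.sqrt_lt_sqrt (sq_nonneg x) (by nlinarith)
  linarith [(abs_lt.mp hx).1]

lemma sahara_eq (a b δ : ℝ) (ha : 0 < a) (ha1 : a ≠ 1) (hb : 0 < b) (w : ℝ) :
    sahara a b δ w = (1 / (2 * (1 - a))) * saharaS b δ w ^ (1 - a)
      - (b ^ 2 / (2 * (a + 1))) * saharaS b δ w ^ (-(1 + a)) := by
  have hs : 0 < saharaS b δ w := saharaS_pos b δ hb w
  unfold sahara saharaS at *
  set x := w - δ
  set r := Real.sqrt (b ^ 2 + x ^ 2) with hrdef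
  have hr2 : r ^ 2 = b ^ 2 + x ^ 2 := Real.sq_sqrt (by positivity)
  have hsa : (0:ℝ) < (x + r) ^ a := Real.rpow_pos_of_pos hs a
  have e1 : (x + r) ^ (1 - a) = (x + r) / (x + r) ^ a := by
    rw [Real.rpow_sub hs, Real.rpow_one]
  have e2 : (x + r) ^ (-(1 + a)) = 1 / ((x + r) * (x + r) ^ a) := by
    rw [Real.rpow_neg hs.le, Real.rpow_add hs, Real.rpow_one, one_div]
  rw [e1, e2]
  have h1 : a - 1 ≠ 0 := sub_ne_zero.mpr ha1
  have h2 : a + 1 ≠ 0 := by positivity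
  have h3 : a ^ 2 - 1 ≠ 0 := by
    intro h; apply h1; nlinarith
  have h4 : (1:ℝ) - a ≠ 0 := fun h => h1 (by linarith)
  have hb2 : b ^ 2 = r ^ 2 - x ^ 2 := by linarith
  rw [hb2]
  field_simp
  ring

lemma saharaS_atTop (b δ : ℝ) : Tendsto (saharaS b δ) atTop atTop := by
  apply tendsto_atTop_mono (f := fun w => w - δ)
  · intro w
    exact le_add_of_nonneg_right (Real.sqrt_nonneg _)
  · exact tendsto_atTop_add_const_right atTop (-δ) tendsto_id

lemma saharaS_atBot (b δ : ℝ) (hb : 0 < b) :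
    Tendsto (saharaS b δ) atBot (𝓝[>] 0) := by
  apply tendsto_nhdsWithin_of_tendsto_nhds_of_eventually_within
  · have key : ∀ w, saharaS b δ w
        = b ^ 2 / (Real.sqrt (b ^ 2 + (w - δ) ^ 2) - (w - δ)) := by
      intro w
      have hs : 0 < saharaS b δ w := saharaS_pos b δ hb w
      unfold saharaS at *
      set x := w - δ
      set r := Real.sqrt (b ^ 2 + x ^ 2) with hrdef
      have hr2 : r ^ 2 = b ^ 2 + x ^ 2 := Real.sq_sqrt (by positivity)
      have hd : 0 < r - x := by
        have hx : |x| < r := by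
          rw [← Real.sqrt_sq_eq_abs]
          exact Real.sqrt_lt_sqrt (sq_nonneg x) (by nlinarith)
        linarith [(abs_lt.mp hx).2]
      field_simp
      nlinarith [hr2]
    have hden : Tendsto (fun w => Real.sqrt (b ^ 2 + (w - δ) ^ 2) - (w - δ))
        atBot atTop := by
      apply tendsto_atTop_mono (f := fun w => -(w - δ))
      · intro w
        have := Real.sqrt_nonneg (b ^ 2 + (w - δ) ^ 2)
        linarith
      · have : Tendsto (fun w : ℝ => w - δ) atBot atBot :=
          tendsto_atBot_add_const_right atBot (-δ) tendsto_id
        exact (tendsto_neg_atBot_atTop).comp this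
    have := Tendsto.div_atTop (tendsto_const_nhds (x := b ^ 2)) hden
    apply this.congr
    intro w
    exact (key w).symm
  · exact Eventually.of_forall fun w => saharaS_pos b δ hb w

/-- Limits of `g s = c₁ s^(1-a) - c₂ s^(-(1+a))` along `𝓝[>] 0`. -/
lemma g_atBot (a b : ℝ) (ha : 0 < a) (ha1 : a ≠ 1) (hb : 0 < b) :
    Tendsto (fun s : ℝ => (1 / (2 * (1 - a))) * s ^ (1 - a)
      - (b ^ 2 / (2 * (a + 1))) * s ^ (-(1 + a))) (𝓝[>] (0:ℝ)) atBot := by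
  have hinv : ∀ c : ℝ, 0 < c →
      Tendsto (fun s : ℝ => s ^ (-c)) (𝓝[>] (0:ℝ)) atTop := by
    intro c hc
    have h : Tendsto (fun s : ℝ => (s⁻¹) ^ c) (𝓝[>] (0:ℝ)) atTop :=
      (tendsto_rpow_atTop hc).comp tendsto_inv_nhdsGT_zero
    apply h.congr'
    filter_upwards [self_mem_nhdsWithin] with s hs
    rw [Real.inv_rpow (le_of_lt hs), ← Real.rpow_neg (le_of_lt hs)]
  have hterm2 : Tendsto (fun s : ℝ => -(b ^ 2 / (2 * (a + 1)) * s ^ (-(1 + a))))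
      (𝓝[>] (0:ℝ)) atBot := by
    apply tendsto_neg_atTop_atBot.comp
    exact Tendsto.const_mul_atTop (by positivity) (hinv (1 + a) (by linarith))
  rcases lt_or_gt_of_ne ha1 with hlt | hgt
  · -- a < 1 : first term → 0
    have hterm1 : Tendsto (fun s : ℝ => (1 / (2 * (1 - a))) * s ^ (1 - a))
        (𝓝[>] (0:ℝ)) (𝓝 0) := by
      have hc : ContinuousAt (fun s : ℝ => s ^ (1 - a)) 0 :=
        Real.continuousAt_rpow_const 0 (1 - a) (Or.inr (by linarith))
      have h0 : Tendsto (fun s : ℝ => s ^ (1 - a)) (𝓝[>] (0:ℝ)) (𝓝 0) := by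
        have h01 : Tendsto (fun s : ℝ => s ^ (1 - a)) (𝓝 (0:ℝ))
            (𝓝 ((0:ℝ) ^ (1 - a))) := hc.tendsto
        rw [Real.zero_rpow (show (1:ℝ) - a ≠ 0 by intro h; exact ha1 (by linarith))] at h01
        exact h01.mono_left nhdsWithin_le_nhds
      simpa using h0.const_mul (1 / (2 * (1 - a)))
    have := hterm1.add_atBot hterm2
    simpa [sub_eq_add_neg] using this
  · -- 1 < a : first term → -∞
    have hterm1 : Tendsto (fun s : ℝ => (1 / (2 * (1 - a))) * s ^ (1 - a))
        (𝓝[>] (0:ℝ)) atBot := by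
      have h : Tendsto (fun s : ℝ => s ^ (-(a - 1))) (𝓝[>] (0:ℝ)) atTop :=
        hinv (a - 1) (by linarith)
      have h' : Tendsto (fun s : ℝ => s ^ (1 - a)) (𝓝[>] (0:ℝ)) atTop := by
        apply h.congr; intro s; rw [neg_sub]
      have hneg : 1 / (2 * (1 - a)) < 0 := by
        apply div_neg_of_pos_of_neg one_pos
        nlinarith
      exact Tendsto.const_mul_atTop_of_neg hneg h'
    have := Tendsto.atBot_add_atBot hterm1 hterm2
    simpa [sub_eq_add_neg] using this

/-- for the SAHARA utility, `lim_{w→+∞} U(w) = 0` when `a > 1`,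
`lim_{w→+∞} U(w) = +∞` when `a ∈ (0,1)`, and `lim_{w→−∞} U(w) = −∞` for all `a > 0`,
`a ≠ 1`. -/
theorem stmt6 (a b δ : ℝ) (ha : 0 < a) (ha1 : a ≠ 1) (hb : 0 < b) :
    (1 < a → Tendsto (sahara a b δ) atTop (𝓝 0)) ∧
    (a < 1 → Tendsto (sahara a b δ) atTop atTop) ∧
    Tendsto (sahara a b δ) atBot atBot := by
  have heq : sahara a b δ = (fun s : ℝ => (1 / (2 * (1 - a))) * s ^ (1 - a)
      - (b ^ 2 / (2 * (a + 1))) * s ^ (-(1 + a))) ∘ saharaS b δ := by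
    funext w
    exact sahara_eq a b δ ha ha1 hb w
  refine ⟨?_, ?_, ?_⟩
  · intro hgt
    rw [heq]
    apply Tendsto.comp _ (saharaS_atTop b δ)
    have h1 : Tendsto (fun s : ℝ => s ^ (1 - a)) atTop (𝓝 0) := by
      have := tendsto_rpow_neg_atTop (show (0:ℝ) < a - 1 by linarith)
      apply this.congr; intro s; rw [neg_sub]
    have h2 : Tendsto (fun s : ℝ => s ^ (-(1 + a))) atTop (𝓝 0) :=
      tendsto_rpow_neg_atTop (by linarith)
    have := (h1.const_mul (1 / (2 * (1 - a)))).sub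
      (h2.const_mul (b ^ 2 / (2 * (a + 1))))
    simpa using this
  · intro hlt
    rw [heq]
    apply Tendsto.comp _ (saharaS_atTop b δ)
    have h1 : Tendsto (fun s : ℝ => (1 / (2 * (1 - a))) * s ^ (1 - a)) atTop atTop :=
      Tendsto.const_mul_atTop
        (by have : (0:ℝ) < 1 - a := by linarith
            positivity)
        (tendsto_rpow_atTop (by linarith))
    have h2 : Tendsto (fun s : ℝ => -(b ^ 2 / (2 * (a + 1)) * s ^ (-(1 + a))))
        atTop (𝓝 0) := by
      have := (tendsto_rpow_neg_atTop (show (0:ℝ) < 1 + a by linarith)).const_mul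
        (b ^ 2 / (2 * (a + 1)))
      simpa using this.neg
    have := h1.atTop_add h2
    simpa [sub_eq_add_neg] using this
  · rw [heq]
    exact (g_atBot a b ha ha1 hb).comp (saharaS_atBot b δ hb)

end
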